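/- Let χ be a locally finite subset of ℝ^d and let (r^-(c))_{c∈χ}, (r^+(c))_{c∈χ} be families of nonnegative reals with r^-(c) ≤ r^+(c) for all c; extend r^- and r^+ by 0 outside χ and set ξ^- = {(c,r^-(c)) : c ∈ χ, r^-(c) > 0}, ξ^+ = {(c,r^+(c)) : c ∈ χ, r^+(c) > 0}. Let s > 0 and suppose π^+ = (x_0,…,x_n) is a ξ^+-good path from 0 to the sphere S(0,s) with τ(π^+;ξ^+) = T(0,S(0,s);ξ^+) (a ξ^+-good geodesic). Then T(0,S(0,s);ξ^-) ≤ T(0,S(0,s);ξ^+) + 2 Σ_{i=1}^{n−1} (r^+(x_i) − r^-(x_i)). -/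

import Mathlib

open MeasureTheory Set

noncomputable section

/-- Euclidean space `ℝ^d`. -/
abbrev Euc (d : ℕ) : Type := EuclideanSpace ℝ (Fin d)

/-- A configuration: a locally finite collection of open balls of `ℝ^d`, encoded by its
radius function `radius : ℝ^d → [0,∞)`, where `radius c > 0` iff `c` is the center of a
ball of the configuration (each center carries a unique radius, so a configuration is the
same as a locally finite subset of `ℝ^d × (0,∞)` whose first coordinates are distinct).
Local finiteness in `ℝ^d × (0,∞)`: every bounded region of `ℝ^d` contains finitely many
centers of radius at least `ε`, for every `ε > 0`. -/
structure Config (d : ℕ) where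
  radius : Euc d → ℝ
  radius_nonneg : ∀ c, 0 ≤ radius c
  locFin : ∀ s : Set (Euc d), Bornology.IsBounded s →
    ∀ ε : ℝ, 0 < ε → {c | c ∈ s ∧ ε ≤ radius c}.Finite

namespace Config

/-- `Σ(ξ)`: the union of the open balls of the configuration. -/
def sigma {d : ℕ} (ξ : Config d) : Set (Euc d) :=
  ⋃ c, Metric.ball c (ξ.radius c)

/-- The restriction of a configuration to a subset `S` of its centers. -/
def restrict {d : ℕ} (ξ : Config d) (S : Set (Euc d)) : Config d where
  radius := S.indicator ξ.radius
  radius_nonneg c := Set.indicator_nonneg (fun a _ => ξ.radius_nonneg a) c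
  locFin s hs ε hε := by
    refine (ξ.locFin s hs ε hε).subset ?_
    rintro c ⟨h1, h2⟩
    refine ⟨h1, ?_⟩
    by_cases h : c ∈ S
    · rwa [Set.indicator_of_mem h] at h2
    · rw [Set.indicator_of_notMem h] at h2; linarith

/-- The configuration keeping only the balls of radius `> θ`. -/
def threshold {d : ℕ} (ξ : Config d) (θ : ℝ) : Config d where
  radius c := if θ < ξ.radius c then ξ.radius c else 0
  radius_nonneg c := by
    split
    · exact ξ.radius_nonneg c
    · exact le_rfl
  locFin s hs ε hε := by
    refine (ξ.locFin s hs ε hε).subset ?_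
    rintro c ⟨h1, h2⟩
    refine ⟨h1, ?_⟩
    split_ifs at h2 with h
    · exact h2
    · linarith

end Config

variable {d : ℕ}

/-- `τ(x,y;ξ)`: the one-dimensional Lebesgue measure of `[x,y] ∖ Σ(ξ)`. -/
def segTau (ξ : Config d) (a b : Euc d) : ℝ :=
  ‖b - a‖ * (volume {t : ℝ | t ∈ Icc (0:ℝ) 1 ∧ a + t • (b - a) ∉ ξ.sigma}).toReal

/-- `ℓ(π)`: the Euclidean length of a finite sequence of points. -/
def pathLen (n : ℕ) (x : Fin (n+1) → Euc d) : ℝ :=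
  ∑ i : Fin n, dist (x i.castSucc) (x i.succ)

/-- `τ(π;ξ)`, the travel time of a path. -/
def pathTau (ξ : Config d) (n : ℕ) (x : Fin (n+1) → Euc d) : ℝ :=
  ∑ i : Fin n, segTau ξ (x i.castSucc) (x i.succ)

/-- The radius of the ball `Z_i^+(π;ξ)` removed at the left endpoint of segment `i`
(zero when the left endpoint is `x_0`, following `Z_0^+ = ∅`). -/
def leftR (ξ : Config d) {n : ℕ} (x : Fin (n+1) → Euc d) (i : Fin n) : ℝ :=
  if (i : ℕ) = 0 then 0 else ξ.radius (x i.castSucc)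

/-- The radius of the ball `Z_{i+1}^-(π;ξ)` removed at the right endpoint of segment `i`
(zero when the right endpoint is `x_n`, following `Z_n^- = ∅`). -/
def rightR (ξ : Config d) {n : ℕ} (x : Fin (n+1) → Euc d) (i : Fin n) : ℝ :=
  if (i : ℕ) + 1 = n then 0 else ξ.radius (x i.succ)

/-- The local travel time of the segment `[a,b]` with removed balls of radii `rl` at `a`
and `rr` at `b`: the length of `[a,b] ∖ (B(a,rl) ∪ B(b,rr))`. -/
def locSegTau (rl rr : ℝ) (a b : Euc d) : ℝ :=
  ‖b - a‖ * (volume {t : ℝ | t ∈ Icc (0:ℝ) 1 ∧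
    a + t • (b - a) ∉ Metric.ball a rl ∪ Metric.ball b rr}).toReal

/-- `τ̃(π;ξ)`, the local travel time of a finite sequence of points. -/
def pathLocTau (ξ : Config d) (n : ℕ) (x : Fin (n+1) → Euc d) : ℝ :=
  ∑ i : Fin n, locSegTau (leftR ξ x i) (rightR ξ x i) (x i.castSucc) (x i.succ)

/-- `π` is a `ξ`-good path: interior points are centers of `ξ`, and on each segment the
removed set `Z_{i-1}^+ ∪ Z_i^-` coincides with `Σ(ξ)`. -/
def IsGood (ξ : Config d) (n : ℕ) (x : Fin (n+1) → Euc d) : Prop :=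
  (∀ i : Fin (n+1), 0 < (i : ℕ) → (i : ℕ) < n → 0 < ξ.radius (x i)) ∧
  ∀ i : Fin n,
    segment ℝ (x i.castSucc) (x i.succ) ∩
      (Metric.ball (x i.castSucc) (leftR ξ x i) ∪ Metric.ball (x i.succ) (rightR ξ x i)) =
    segment ℝ (x i.castSucc) (x i.succ) ∩ ξ.sigma

/-- `T(A,B;ξ)`: the infimum of travel times over paths (sequences of distinct points)
from `A` to `B`; `T(a,b;ξ)` is the special case `A = {a}`, `B = {b}`. -/
def Ttime (ξ : Config d) (A B : Set (Euc d)) : ℝ :=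
  sInf {v : ℝ | ∃ (n : ℕ) (x : Fin (n+1) → Euc d), Function.Injective x ∧
    x 0 ∈ A ∧ x (Fin.last n) ∈ B ∧ v = pathTau ξ n x}

/-- `T^□(a_0,…,a_k;ξ)`: infimum over pairwise disjoint finite subsets `ξ^1,…,ξ^k` of `ξ`
(given by disjoint finite sets of centers) of `Σ_j T(a_{j-1},a_j;ξ^j)`. -/
def TSq (ξ : Config d) (k : ℕ) (a : ℕ → Euc d) : ℝ :=
  sInf {v : ℝ | ∃ S : ℕ → Set (Euc d),
    (∀ j, (S j).Finite) ∧
    (∀ j, ∀ c ∈ S j, 0 < ξ.radius c) ∧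
    (∀ i j, i < k → j < k → i ≠ j → Disjoint (S i) (S j)) ∧
    v = ∑ j ∈ Finset.range k, Ttime (ξ.restrict (S j)) {a j} {a (j+1)}}

/-- The greedy functional `G(s;ξ)`: the supremum of `r(π;ξ)/ℓ(π)` over paths starting at
`0`, with at least two points, and at least one point outside the open ball `B(0,s)`. -/
def greedyG (ξ : Config d) (s : ℝ) : ℝ :=
  sSup {g : ℝ | ∃ (n : ℕ) (x : Fin (n+1) → Euc d), Function.Injective x ∧ 1 ≤ n ∧
    x 0 = 0 ∧ (∃ i : Fin (n+1), s ≤ ‖x i‖) ∧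
    g = (∑ i : Fin (n+1), ξ.radius (x i)) / pathLen n x}

/-- The vertices of a path, clamped: `clampPt n x j = x_{min(j,n)}`. -/
def clampPt (n : ℕ) (x : Fin (n+1) → Euc d) (j : ℕ) : Euc d :=
  x ⟨min j n, Nat.lt_succ_of_le (min_le_right j n)⟩

/-- Cumulative length of the first `j` segments of the path. -/
def cumLen (n : ℕ) (x : Fin (n+1) → Euc d) (j : ℕ) : ℝ :=
  ∑ i ∈ Finset.range j, dist (clampPt n x i) (clampPt n x (i+1))

/-- Index of the segment containing the arc-length parameter `t`. -/
def segIdx (n : ℕ) (x : Fin (n+1) → Euc d) (t : ℝ) : ℕ :=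
  sSup {j : ℕ | j ≤ n ∧ cumLen n x j ≤ t}

/-- The arc-length parametrization `[0,ℓ(π)] → ℝ^d` of the path. -/
def pathParam (n : ℕ) (x : Fin (n+1) → Euc d) (t : ℝ) : Euc d :=
  clampPt n x (segIdx n x t) +
    ((t - cumLen n x (segIdx n x t)) /
        dist (clampPt n x (segIdx n x t)) (clampPt n x (segIdx n x t + 1))) •
      (clampPt n x (segIdx n x t + 1) - clampPt n x (segIdx n x t))

/-- `(a_0,…,a_k)`, together with the times `(t_0,…,t_k)`, is the `ρ`-skeleton of the path
`π` (viewed as an arc-length parametrized curve): `t_0 = 0`, `a_i = π(t_i)`, each `t_{i+1}`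
is the first time after `t_i` at which the curve meets the sphere `S(a_i,ρ)`, and after
time `t_k` the curve stays inside the open ball `B(a_k,ρ)`. -/
structure IsSkeleton (n : ℕ) (x : Fin (n+1) → Euc d) (ρ : ℝ) (k : ℕ)
    (a : ℕ → Euc d) (t : ℕ → ℝ) : Prop where
  t_zero : t 0 = 0
  a_eq : ∀ i ≤ k, a i = pathParam n x (t i)
  t_mono : ∀ i < k, t i < t (i + 1)
  t_mem : ∀ i ≤ k, 0 ≤ t i ∧ t i ≤ pathLen n x
  stays : ∀ i < k, ∀ s, t i ≤ s → s < t (i + 1) → pathParam n x s ∈ Metric.ball (a i) ρ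
  exits : ∀ i < k, dist (pathParam n x (t (i + 1))) (a i) = ρ
  final : ∀ s, t k ≤ s → s ≤ pathLen n x → pathParam n x s ∈ Metric.ball (a k) ρ


lemma segTau_nonneg {d : ℕ} (ξ : Config d) (a b : Euc d) : 0 ≤ segTau ξ a b :=
  mul_nonneg (norm_nonneg _) ENNReal.toReal_nonneg

lemma seg_key {d : ℕ} (ξm ξp : Config d) (a b : Euc d) (hab : a ≠ b)
    (rl rr ra rb : ℝ) (hla : ra ≤ rl) (hrb : rb ≤ rr)
    (hgood : segment ℝ a b ∩ (Metric.ball a rl ∪ Metric.ball b rr)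
      = segment ℝ a b ∩ ξp.sigma)
    (hba : Metric.ball a ra ⊆ ξm.sigma) (hbb : Metric.ball b rb ⊆ ξm.sigma) :
    segTau ξm a b ≤ segTau ξp a b + ((rl - ra) + (rr - rb)) := by
  set L := ‖b - a‖ with hLdef
  have hL0 : 0 < L := by
    rw [hLdef, norm_pos_iff, sub_ne_zero]; exact fun h => hab h.symm
  set A := {t : ℝ | t ∈ Icc (0:ℝ) 1 ∧ a + t • (b - a) ∉ ξm.sigma} with hA
  set B := {t : ℝ | t ∈ Icc (0:ℝ) 1 ∧ a + t • (b - a) ∉ ξp.sigma} with hB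
  have hsub : A ⊆ B ∪ (Ico (ra/L) (rl/L) ∪ Ioc (1 - rr/L) (1 - rb/L)) := by
    rintro t ⟨ht, hm⟩
    by_cases hp : a + t • (b - a) ∈ ξp.sigma
    · right
      have hseg : a + t • (b - a) ∈ segment ℝ a b := by
        rw [segment_eq_image']; exact ⟨t, ht, rfl⟩
      have hball : a + t • (b - a) ∈ Metric.ball a rl ∪ Metric.ball b rr := by
        have : a + t • (b - a) ∈ segment ℝ a b ∩ (Metric.ball a rl ∪ Metric.ball b rr) := by
          rw [hgood]; exact ⟨hseg, hp⟩
        exact this.2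
      have hda : dist (a + t • (b - a)) a = t * L := by
        rw [dist_eq_norm]
        simp only [add_sub_cancel_left, norm_smul, Real.norm_eq_abs,
          abs_of_nonneg ht.1, hLdef]
      have hdb : dist (a + t • (b - a)) b = (1 - t) * L := by
        have : a + t • (b - a) - b = -((1 - t) • (b - a)) := by module
        rw [dist_eq_norm, this, norm_neg, norm_smul, Real.norm_eq_abs,
          abs_of_nonneg (by linarith [ht.2] : (0:ℝ) ≤ 1 - t), hLdef]
      rcases hball with h | h
      · left
        rw [Metric.mem_ball, hda] at h
        have hge : ¬ dist (a + t • (b - a)) a < ra :=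
          fun hc => hm (hba (Metric.mem_ball.mpr hc))
        rw [hda, not_lt] at hge
        constructor
        · rw [div_le_iff₀ hL0]; linarith [mul_comm t L]
        · rw [lt_div_iff₀ hL0]; linarith
      · right
        rw [Metric.mem_ball, hdb] at h
        have hge : ¬ dist (a + t • (b - a)) b < rb :=
          fun hc => hm (hbb (Metric.mem_ball.mpr hc))
        rw [hdb, not_lt] at hge
        constructor
        · rw [sub_lt_iff_lt_add, ← sub_lt_iff_lt_add', lt_div_iff₀ hL0]; linarith
        · rw [le_sub_iff_add_le, ← le_sub_iff_add_le', div_le_iff₀ hL0]; linarith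
    · exact Or.inl ⟨ht, hp⟩
  have hmeasB : volume B ≠ ⊤ := by
    have : B ⊆ Icc (0:ℝ) 1 := fun t ht => ht.1
    exact ((measure_mono this).trans_lt (by simp [Real.volume_Icc])).ne
  have hstep : volume A ≤ volume B + (ENNReal.ofReal ((rl - ra)/L)
      + ENNReal.ofReal ((rr - rb)/L)) := by
    calc volume A ≤ volume (B ∪ (Ico (ra/L) (rl/L) ∪ Ioc (1 - rr/L) (1 - rb/L))) :=
          measure_mono hsub
      _ ≤ volume B + volume (Ico (ra/L) (rl/L) ∪ Ioc (1 - rr/L) (1 - rb/L)) :=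
          measure_union_le _ _
      _ ≤ volume B + (volume (Ico (ra/L) (rl/L)) + volume (Ioc (1 - rr/L) (1 - rb/L))) :=
          add_le_add le_rfl (measure_union_le _ _)
      _ = volume B + (ENNReal.ofReal ((rl - ra)/L) + ENNReal.ofReal ((rr - rb)/L)) := by
          rw [Real.volume_Ico, Real.volume_Ioc]
          congr 2 <;> ring_nf
  have hu : (0:ℝ) ≤ (rl - ra)/L := div_nonneg (by linarith) hL0.le
  have hv : (0:ℝ) ≤ (rr - rb)/L := div_nonneg (by linarith) hL0.le
  have htoReal : (volume A).toReal ≤ (volume B).toReal + ((rl - ra)/L + (rr - rb)/L) := by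
    have h2 : ((volume B + (ENNReal.ofReal ((rl - ra)/L) + ENNReal.ofReal ((rr - rb)/L)))).toReal
        = (volume B).toReal + ((rl - ra)/L + (rr - rb)/L) := by
      rw [ENNReal.toReal_add hmeasB (by finiteness), ENNReal.toReal_add (by finiteness) (by finiteness),
        ENNReal.toReal_ofReal hu, ENNReal.toReal_ofReal hv]
    calc (volume A).toReal ≤ _ := ENNReal.toReal_mono (by finiteness) hstep
      _ = _ := h2
  have : L * (volume A).toReal ≤ L * ((volume B).toReal + ((rl - ra)/L + (rr - rb)/L)) :=
    mul_le_mul_of_nonneg_left htoReal hL0.le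
  calc segTau ξm a b = L * (volume A).toReal := rfl
    _ ≤ L * ((volume B).toReal + ((rl - ra)/L + (rr - rb)/L)) := this
    _ = L * (volume B).toReal + ((rl - ra) + (rr - rb)) := by
        field_simp
    _ = segTau ξp a b + ((rl - ra) + (rr - rb)) := rfl


lemma reindexL {n : ℕ} (f : Fin (n+1) → ℝ) :
    ∑ i : Fin n, (if (i : ℕ) = 0 then 0 else f i.castSucc)
      = ∑ j ∈ Finset.univ.filter (fun j : Fin (n+1) => 0 < (j : ℕ) ∧ (j : ℕ) < n), f j := by
  have h1 : ∑ i : Fin n, (if (i : ℕ) = 0 then 0 else f i.castSucc)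
      = ∑ i ∈ Finset.univ.filter (fun i : Fin n => ¬((i : ℕ) = 0)), f i.castSucc := by
    rw [Finset.sum_filter]
    exact Finset.sum_congr rfl fun i _ => by rw [ite_not]
  rw [h1]
  refine Finset.sum_bij' (fun i _ => i.castSucc)
    (fun j hj => ⟨(j : ℕ), ?_⟩) ?_ ?_ ?_ ?_ ?_
  · exact (Finset.mem_filter.mp hj).2.2
  · intro i hi
    simp only [Finset.mem_filter, Finset.mem_univ, true_and] at hi ⊢
    exact ⟨Nat.pos_of_ne_zero hi, i.isLt⟩
  · intro j hj
    simp only [Finset.mem_filter, Finset.mem_univ, true_and] at hj ⊢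
    omega
  · intro i _; ext; simp
  · intro j _; ext; simp
  · intro i _; rfl

lemma reindexR {n : ℕ} (f : Fin (n+1) → ℝ) :
    ∑ i : Fin n, (if (i : ℕ) + 1 = n then 0 else f i.succ)
      = ∑ j ∈ Finset.univ.filter (fun j : Fin (n+1) => 0 < (j : ℕ) ∧ (j : ℕ) < n), f j := by
  have h1 : ∑ i : Fin n, (if (i : ℕ) + 1 = n then 0 else f i.succ)
      = ∑ i ∈ Finset.univ.filter (fun i : Fin n => ¬((i : ℕ) + 1 = n)), f i.succ := by
    rw [Finset.sum_filter]
    exact Finset.sum_congr rfl fun i _ => by rw [ite_not]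
  rw [h1]
  refine Finset.sum_bij' (fun i _ => i.succ)
    (fun j hj => ⟨(j : ℕ) - 1, ?_⟩) ?_ ?_ ?_ ?_ ?_
  · have := (Finset.mem_filter.mp hj).2.2; omega
  · intro i hi
    simp only [Finset.mem_filter, Finset.mem_univ, true_and, Fin.val_succ] at hi ⊢
    exact ⟨Nat.succ_pos _, lt_of_le_of_ne (Nat.succ_le_of_lt i.isLt) hi⟩
  · intro j hj
    simp only [Finset.mem_filter, Finset.mem_univ, true_and] at hj ⊢
    omega
  · intro i _; ext; simp
  · intro j hj
    have := (Finset.mem_filter.mp hj).2.1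
    ext; simp only [Fin.val_succ]; omega
  · intro i _; rfl


/-- comparison of travel times to the sphere S(0,s) for two coupled
configurations ξ^- ≤ ξ^+, along a ξ^+-good geodesic π^+ from 0 to S(0,s). -/
theorem stmt16 {d : ℕ} (hd : 2 ≤ d) (ξm ξp : Config d)
    (hle : ∀ c, ξm.radius c ≤ ξp.radius c)
    (s : ℝ) (hs : 0 < s)
    (n : ℕ) (x : Fin (n+1) → Euc d) (hinj : Function.Injective x)
    (hx0 : x 0 = 0) (hxn : x (Fin.last n) ∈ Metric.sphere (0 : Euc d) s)
    (hgood : IsGood ξp n x)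
    (hgeo : pathTau ξp n x = Ttime ξp {(0 : Euc d)} (Metric.sphere (0 : Euc d) s)) :
    Ttime ξm {(0 : Euc d)} (Metric.sphere (0 : Euc d) s) ≤
      Ttime ξp {(0 : Euc d)} (Metric.sphere (0 : Euc d) s) +
        2 * ∑ i ∈ Finset.univ.filter (fun i : Fin (n+1) => 0 < (i : ℕ) ∧ (i : ℕ) < n),
          (ξp.radius (x i) - ξm.radius (x i)) :=  by
  classical
  -- gap functions
  set g : Fin (n+1) → ℝ := fun j => ξp.radius (x j) - ξm.radius (x j) with hg
  have key : ∀ i : Fin n, segTau ξm (x i.castSucc) (x i.succ)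
      ≤ segTau ξp (x i.castSucc) (x i.succ)
        + ((leftR ξp x i - leftR ξm x i) + (rightR ξp x i - rightR ξm x i)) := by
    intro i
    refine seg_key ξm ξp _ _ (fun h => absurd (hinj h) (Fin.castSucc_lt_succ : i.castSucc < i.succ).ne)
      (leftR ξp x i) (rightR ξp x i) (leftR ξm x i) (rightR ξm x i) ?_ ?_ (hgood.2 i) ?_ ?_
    · unfold leftR; split_ifs; exacts [le_rfl, hle _]
    · unfold rightR; split_ifs; exacts [le_rfl, hle _]
    · unfold leftR; split_ifs
      · simp [Metric.ball_zero]
      · exact Set.subset_iUnion (fun c => Metric.ball c (ξm.radius c)) _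
    · unfold rightR; split_ifs
      · simp [Metric.ball_zero]
      · exact Set.subset_iUnion (fun c => Metric.ball c (ξm.radius c)) _
  have hsum : pathTau ξm n x ≤ pathTau ξp n x
      + ∑ i : Fin n, ((leftR ξp x i - leftR ξm x i) + (rightR ξp x i - rightR ξm x i)) := by
    unfold pathTau
    rw [← Finset.sum_add_distrib]
    exact Finset.sum_le_sum fun i _ => key i
  have hL : ∀ i : Fin n, leftR ξp x i - leftR ξm x i
      = (if (i : ℕ) = 0 then 0 else g i.castSucc) := by
    intro i; unfold leftR; split_ifs <;> simp [hg]
  have hR : ∀ i : Fin n, rightR ξp x i - rightR ξm x i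
      = (if (i : ℕ) + 1 = n then 0 else g i.succ) := by
    intro i; unfold rightR; split_ifs <;> simp [hg]
  have hre : ∑ i : Fin n, ((leftR ξp x i - leftR ξm x i) + (rightR ξp x i - rightR ξm x i))
      = 2 * ∑ i ∈ Finset.univ.filter (fun i : Fin (n+1) => 0 < (i : ℕ) ∧ (i : ℕ) < n),
          (ξp.radius (x i) - ξm.radius (x i)) := by
    rw [Finset.sum_add_distrib]
    calc (∑ i : Fin n, (leftR ξp x i - leftR ξm x i))
          + ∑ i : Fin n, (rightR ξp x i - rightR ξm x i)
        = (∑ i : Fin n, (if (i : ℕ) = 0 then 0 else g i.castSucc))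
          + ∑ i : Fin n, (if (i : ℕ) + 1 = n then 0 else g i.succ) := by
          rw [Finset.sum_congr rfl fun i _ => hL i, Finset.sum_congr rfl fun i _ => hR i]
      _ = 2 * ∑ i ∈ Finset.univ.filter (fun i : Fin (n+1) => 0 < (i : ℕ) ∧ (i : ℕ) < n), g i := by
          rw [reindexL g, reindexR g]; ring
      _ = _ := rfl
  have hTm : Ttime ξm {(0 : Euc d)} (Metric.sphere (0 : Euc d) s) ≤ pathTau ξm n x := by
    apply csInf_le
    · refine ⟨0, ?_⟩
      rintro v ⟨m, y, -, -, -, rfl⟩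
      exact Finset.sum_nonneg fun i _ => segTau_nonneg ξm _ _
    · exact ⟨n, x, hinj, by simp [hx0], hxn, rfl⟩
  calc Ttime ξm {(0 : Euc d)} (Metric.sphere (0 : Euc d) s) ≤ pathTau ξm n x := hTm
    _ ≤ pathTau ξp n x
        + ∑ i : Fin n, ((leftR ξp x i - leftR ξm x i) + (rightR ξp x i - rightR ξm x i)) := hsum
    _ = Ttime ξp {(0 : Euc d)} (Metric.sphere (0 : Euc d) s)
        + 2 * ∑ i ∈ Finset.univ.filter (fun i : Fin (n+1) => 0 < (i : ℕ) ∧ (i : ℕ) < n),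
            (ξp.radius (x i) - ξm.radius (x i)) := by rw [hgeo, hre]


end
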